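/- Let T > 0 and β ≥ 1. Then lim_{t↑T} (T-t)^β · ∫₀ᵗ exp(∓(2/β)(T-s)^β)/(T-s)² ds = (1/β)·lim_{t↑T}(T-t)^{β-1}, which equals 1 if β = 1 and 0 if β > 1. For 0 < β < 1 this limit does not exist (is infinite). -/

import Mathlib

open Real Filter intervalIntegral

section Aux17

lemma aux17_contOn (T c β : ℝ) (hβ : 0 < β) :
    ContinuousOn (fun s => Real.exp (c * (T - s) ^ β) / (T - s) ^ 2) (Set.Iio T) := by
  apply ContinuousOn.div
  · exact Real.continuous_exp.comp_continuousOn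
      (continuousOn_const.mul
        (((continuous_const.sub continuous_id).continuousOn).rpow_const fun x _ => Or.inr hβ.le))
  · exact ((continuous_const.sub continuous_id).pow 2).continuousOn
  · intro x hx
    have : 0 < T - x := sub_pos.mpr hx
    positivity

lemma aux17_ftc (T a b : ℝ) (ha : a < T) (hb : b < T) :
    ∫ s in a..b, ((T - s) ^ 2)⁻¹ = (T - b)⁻¹ - (T - a)⁻¹ := by
  have key : ∀ s ∈ Set.uIcc a b, HasDerivAt (fun x => (T - x)⁻¹) ((T - s) ^ 2)⁻¹ s := by
    intro s hs
    have hsT : s < T := lt_of_le_of_lt (hs.2) (max_lt ha hb) |>.trans_le le_rfl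
    have h1 : HasDerivAt (fun x : ℝ => T - x) (-1) s := by
      simpa using (hasDerivAt_id s).const_sub T
    have := h1.inv (by linarith : T - s ≠ 0)
    exact this.congr_deriv (by ring)
  apply integral_eq_sub_of_hasDerivAt key
  apply ContinuousOn.intervalIntegrable
  apply ContinuousOn.inv₀
  · exact ((continuous_const.sub continuous_id).pow 2).continuousOn
  · intro x hx
    have : x < T := lt_of_le_of_lt hx.2 (max_lt ha hb) |>.trans_le le_rfl
    have : 0 < T - x := by linarith
    positivity

lemma aux17_intgr (T c β : ℝ) (hβ : 0 < β) {a b : ℝ} (ha : a < T) (hb : b < T) :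
    IntervalIntegrable (fun s => Real.exp (c * (T - s) ^ β) / (T - s) ^ 2)
      MeasureTheory.volume a b := by
  apply ContinuousOn.intervalIntegrable
  apply (aux17_contOn T c β hβ).mono
  intro x hx
  exact lt_of_le_of_lt hx.2 (max_lt ha hb)

lemma aux17_intgr2 (T m : ℝ) {a b : ℝ} (ha : a < T) (hb : b < T) :
    IntervalIntegrable (fun s => m * ((T - s) ^ 2)⁻¹) MeasureTheory.volume a b := by
  apply ContinuousOn.intervalIntegrable
  apply ContinuousOn.mul continuousOn_const
  apply ContinuousOn.inv₀ ((continuous_const.sub continuous_id).pow 2).continuousOn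
  intro x hx
  have : x < T := lt_of_le_of_lt hx.2 (max_lt ha hb)
  have : 0 < T - x := by linarith
  exact pow_ne_zero 2 this.ne'

lemma aux17_int_bounds (T β : ℝ) (hβ : 0 < β) (c : ℝ) {t₀ t : ℝ} (h0 : t₀ ≤ t) (ht : t < T) :
    Real.exp (-(|c| * (T - t₀) ^ β)) * ((T - t)⁻¹ - (T - t₀)⁻¹)
      ≤ (∫ s in t₀..t, Real.exp (c * (T - s) ^ β) / (T - s) ^ 2) ∧
    (∫ s in t₀..t, Real.exp (c * (T - s) ^ β) / (T - s) ^ 2)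
      ≤ Real.exp (|c| * (T - t₀) ^ β) * ((T - t)⁻¹ - (T - t₀)⁻¹) := by
  have ht₀ : t₀ < T := lt_of_le_of_lt h0 ht
  have hbd : ∀ s ∈ Set.Icc t₀ t, |c * (T - s) ^ β| ≤ |c| * (T - t₀) ^ β := by
    intro s hs
    have hsT : 0 < T - s := by have := hs.2; linarith
    rw [abs_mul, abs_of_nonneg (Real.rpow_nonneg hsT.le β)]
    apply mul_le_mul_of_nonneg_left _ (abs_nonneg c)
    exact Real.rpow_le_rpow hsT.le (by linarith [hs.1]) hβ.le
  constructor
  · calc Real.exp (-(|c| * (T - t₀) ^ β)) * ((T - t)⁻¹ - (T - t₀)⁻¹)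
        = ∫ s in t₀..t, Real.exp (-(|c| * (T - t₀) ^ β)) * ((T - s) ^ 2)⁻¹ := by
          rw [intervalIntegral.integral_const_mul, aux17_ftc T t₀ t ht₀ ht]
      _ ≤ _ := by
          apply intervalIntegral.integral_mono_on h0 (aux17_intgr2 T _ ht₀ ht)
            (aux17_intgr T c β hβ ht₀ ht)
          intro s hs
          have hsT : 0 < T - s := by have := hs.2; linarith
          rw [div_eq_mul_inv]
          apply mul_le_mul_of_nonneg_right _ (by positivity)
          apply Real.exp_le_exp.mpr
          linarith [abs_le.mp (hbd s hs) |>.1]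
  · calc (∫ s in t₀..t, Real.exp (c * (T - s) ^ β) / (T - s) ^ 2)
        ≤ ∫ s in t₀..t, Real.exp (|c| * (T - t₀) ^ β) * ((T - s) ^ 2)⁻¹ := by
          apply intervalIntegral.integral_mono_on h0 (aux17_intgr T c β hβ ht₀ ht)
            (aux17_intgr2 T _ ht₀ ht)
          intro s hs
          have hsT : 0 < T - s := by have := hs.2; linarith
          rw [div_eq_mul_inv]
          apply mul_le_mul_of_nonneg_right _ (by positivity)
          exact Real.exp_le_exp.mpr (abs_le.mp (hbd s hs) |>.2)
      _ = _ := by rw [intervalIntegral.integral_const_mul, aux17_ftc T t₀ t ht₀ ht]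

lemma aux17_rpow0 (a : ℝ) (ha : 0 < a) :
    Tendsto (fun u : ℝ => u ^ a) (nhdsWithin 0 (Set.Ioi 0)) (nhds 0) := by
  have h : ContinuousAt (fun u : ℝ => u ^ a) 0 :=
    Real.continuousAt_rpow_const 0 a (Or.inr ha.le)
  have h2 := h.tendsto.mono_left (nhdsWithin_le_nhds (s := Set.Ioi (0:ℝ)))
  simpa [Real.zero_rpow ha.ne'] using h2

lemma aux17_rpowNegTop (a : ℝ) (ha : a < 0) :
    Tendsto (fun u : ℝ => u ^ a) (nhdsWithin 0 (Set.Ioi 0)) atTop := by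
  have h := (tendsto_rpow_atTop (y := -a) (by linarith)).comp tendsto_inv_nhdsGT_zero
  apply h.congr'
  filter_upwards [self_mem_nhdsWithin] with u hu
  have hu' : (0:ℝ) < u := hu
  simp only [Function.comp]
  rw [← Real.rpow_neg_one u, ← Real.rpow_mul hu'.le]
  ring_nf

lemma aux17_lim1 (T : ℝ) :
    Tendsto (fun t => T - t) (nhdsWithin T (Set.Iio T)) (nhdsWithin 0 (Set.Ioi 0)) := by
  rw [tendsto_nhdsWithin_iff]
  constructor
  · have h : Tendsto (fun t : ℝ => T - t) (nhds T) (nhds 0) := by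
      have hc : Continuous (fun t : ℝ => T - t) := continuous_const.sub continuous_id
      have := hc.tendsto T
      simpa using this
    exact h.mono_left nhdsWithin_le_nhds
  · filter_upwards [self_mem_nhdsWithin] with t ht
    exact sub_pos.mpr (Set.mem_Iio.mp ht)

lemma aux17_sqrtlim :
    Tendsto Real.sqrt (nhdsWithin 0 (Set.Ioi 0)) (nhdsWithin 0 (Set.Ioi 0)) := by
  rw [tendsto_nhdsWithin_iff]
  constructor
  · have h : Tendsto Real.sqrt (nhds 0) (nhds 0) := by
      simpa using Real.continuous_sqrt.tendsto 0
    exact h.mono_left nhdsWithin_le_nhds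
  · filter_upwards [self_mem_nhdsWithin] with u hu
    exact Real.sqrt_pos.mpr (Set.mem_Ioi.mp hu)

lemma aux17_ge_one (T : ℝ) (hT : 0 < T) (β : ℝ) (hβ : 0 < β) (hβ1 : 1 ≤ β) (c L : ℝ)
    (hL : Tendsto (fun u : ℝ => u ^ β * u⁻¹) (nhdsWithin 0 (Set.Ioi 0)) (nhds L)) :
    Tendsto (fun t => (T - t) ^ β
        * ∫ s in (0:ℝ)..t, Real.exp (c * (T - s) ^ β) / (T - s) ^ 2)
      (nhdsWithin T (Set.Iio T)) (nhds L) := by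
  set l₀ := nhdsWithin (0:ℝ) (Set.Ioi 0) with hl₀
  set C := Real.exp (|c| * T ^ β) with hC
  have hvβ : Tendsto (fun u : ℝ => Real.sqrt u ^ β) l₀ (nhds 0) :=
    (aux17_rpow0 β hβ).comp aux17_sqrtlim
  have hexp : ∀ d : ℝ, Tendsto (fun u : ℝ => Real.exp (d * Real.sqrt u ^ β)) l₀ (nhds 1) := by
    intro d
    have h1 : Tendsto (fun u : ℝ => d * Real.sqrt u ^ β) l₀ (nhds 0) := by
      simpa using (tendsto_const_nhds (x := d) (f := l₀)).mul hvβ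
    have := (Real.continuous_exp.tendsto 0).comp h1
    simpa [Function.comp_def] using this
  have h12 : Tendsto (fun u : ℝ => u ^ β * (Real.sqrt u)⁻¹) l₀ (nhds 0) := by
    apply (aux17_rpow0 (β - 1/2) (by linarith)).congr'
    filter_upwards [self_mem_nhdsWithin] with u hu
    have hu' : (0:ℝ) < u := hu
    rw [Real.sqrt_eq_rpow, ← Real.rpow_neg hu'.le, ← Real.rpow_add hu']
    ring_nf
  set Lo : ℝ → ℝ := fun u => Real.exp (-(|c| * Real.sqrt u ^ β))
      * (u ^ β * u⁻¹ - u ^ β * (Real.sqrt u)⁻¹) with hLo_def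
  set Hi : ℝ → ℝ := fun u => C * (u ^ β * (Real.sqrt u)⁻¹)
      + Real.exp (|c| * Real.sqrt u ^ β) * (u ^ β * u⁻¹ - u ^ β * (Real.sqrt u)⁻¹) with hHi_def
  have hLoLim : Tendsto Lo l₀ (nhds L) := by
    have hneg : Tendsto (fun u : ℝ => Real.exp (-(|c| * Real.sqrt u ^ β))) l₀ (nhds 1) := by
      have := hexp (-|c|)
      simpa [neg_mul] using this
    have := hneg.mul (hL.sub h12)
    simpa using this
  have hHiLim : Tendsto Hi l₀ (nhds L) := by
    have := ((tendsto_const_nhds (x := C) (f := l₀)).mul h12).add ((hexp |c|).mul (hL.sub h12))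
    simpa using this
  have hminpos : 0 < min 1 (T ^ 2) := lt_min zero_lt_one (by positivity)
  have hmem : Set.Ioo (T - min 1 (T ^ 2)) T ∈ nhdsWithin T (Set.Iio T) :=
    Ioo_mem_nhdsLT_of_mem ⟨by linarith, le_refl T⟩
  have hbnd : ∀ t ∈ Set.Ioo (T - min 1 (T ^ 2)) T,
      Lo (T - t) ≤ (T - t) ^ β * (∫ s in (0:ℝ)..t, Real.exp (c * (T - s) ^ β) / (T - s) ^ 2) ∧
      (T - t) ^ β * (∫ s in (0:ℝ)..t, Real.exp (c * (T - s) ^ β) / (T - s) ^ 2) ≤ Hi (T - t) := by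
    intro t ht
    set u := T - t with hu_def
    have hu0 : 0 < u := sub_pos.mpr ht.2
    have hu1 : u ≤ 1 := by
      have := ht.1
      have h2 : min 1 (T ^ 2) ≤ 1 := min_le_left _ _
      simp only [hu_def]; linarith
    have huT2 : u < T ^ 2 := by
      have := ht.1
      have h2 : min 1 (T ^ 2) ≤ T ^ 2 := min_le_right _ _
      simp only [hu_def]; linarith
    set v := Real.sqrt u with hv_def
    have hv0 : 0 < v := Real.sqrt_pos.mpr hu0
    have hvT : v < T := by
      have := Real.sqrt_lt_sqrt hu0.le huT2
      rwa [Real.sqrt_sq hT.le] at this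
    have huv : u ≤ v := by
      nlinarith [Real.sq_sqrt hu0.le, Real.sqrt_nonneg u]
    set t₀ := T - v with ht₀_def
    have ht₀0 : (0:ℝ) ≤ t₀ := by simp only [ht₀_def]; linarith
    have ht₀T : t₀ < T := by simp only [ht₀_def]; linarith
    have ht₀t : t₀ ≤ t := by simp only [ht₀_def, hu_def] at *; linarith
    have htT : t < T := ht.2
    have hTt₀ : T - t₀ = v := by simp [ht₀_def]
    have hsplit : (∫ s in (0:ℝ)..t, Real.exp (c * (T - s) ^ β) / (T - s) ^ 2)
        = (∫ s in (0:ℝ)..t₀, Real.exp (c * (T - s) ^ β) / (T - s) ^ 2)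
        + (∫ s in t₀..t, Real.exp (c * (T - s) ^ β) / (T - s) ^ 2) :=
      (intervalIntegral.integral_add_adjacent_intervals
        (aux17_intgr T c β hβ hT ht₀T) (aux17_intgr T c β hβ ht₀T htT)).symm
    have hI₀ := aux17_int_bounds T β hβ c ht₀0 ht₀T
    have hI₁ := aux17_int_bounds T β hβ c ht₀t htT
    rw [sub_zero] at hI₀
    rw [hTt₀] at hI₁
    have hI₀low : (0:ℝ) ≤ ∫ s in (0:ℝ)..t₀, Real.exp (c * (T - s) ^ β) / (T - s) ^ 2 := by
      refine le_trans ?_ hI₀.1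
      apply mul_nonneg (Real.exp_nonneg _)
      have : T⁻¹ ≤ (T - t₀)⁻¹ := by
        apply inv_anti₀
        · linarith
        · linarith
      linarith
    have hI₀hi : (∫ s in (0:ℝ)..t₀, Real.exp (c * (T - s) ^ β) / (T - s) ^ 2) ≤ C * v⁻¹ := by
      refine le_trans hI₀.2 ?_
      rw [hTt₀, hC]
      have h1 : (0:ℝ) < T⁻¹ := by positivity
      have h2 : (0:ℝ) < Real.exp (|c| * T ^ β) := Real.exp_pos _
      nlinarith [h2]
    have huβ : (0:ℝ) ≤ u ^ β := Real.rpow_nonneg hu0.le β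
    constructor
    · rw [hsplit]
      have : Real.exp (-(|c| * v ^ β)) * (u⁻¹ - v⁻¹)
          ≤ (∫ s in (0:ℝ)..t₀, Real.exp (c * (T - s) ^ β) / (T - s) ^ 2)
          + (∫ s in t₀..t, Real.exp (c * (T - s) ^ β) / (T - s) ^ 2) := by
        rw [← hu_def] at hI₁
        linarith [hI₁.1]
      calc Lo u = u ^ β * (Real.exp (-(|c| * v ^ β)) * (u⁻¹ - v⁻¹)) := by
            simp only [hLo_def, ← hv_def]; ring
        _ ≤ _ := mul_le_mul_of_nonneg_left this huβ
    · rw [hsplit]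
      have hstep : (∫ s in (0:ℝ)..t₀, Real.exp (c * (T - s) ^ β) / (T - s) ^ 2)
          + (∫ s in t₀..t, Real.exp (c * (T - s) ^ β) / (T - s) ^ 2)
          ≤ C * v⁻¹ + Real.exp (|c| * v ^ β) * (u⁻¹ - v⁻¹) := by
        rw [← hu_def] at hI₁
        linarith [hI₁.2]
      calc u ^ β * ((∫ s in (0:ℝ)..t₀, Real.exp (c * (T - s) ^ β) / (T - s) ^ 2)
          + (∫ s in t₀..t, Real.exp (c * (T - s) ^ β) / (T - s) ^ 2))
          ≤ u ^ β * (C * v⁻¹ + Real.exp (|c| * v ^ β) * (u⁻¹ - v⁻¹)) :=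
            mul_le_mul_of_nonneg_left hstep huβ
        _ = Hi u := by simp only [hHi_def, ← hv_def]; ring
  refine tendsto_of_tendsto_of_tendsto_of_le_of_le'
    (hLoLim.comp (aux17_lim1 T)) (hHiLim.comp (aux17_lim1 T)) ?_ ?_
  · filter_upwards [hmem] with t ht
    exact (hbnd t ht).1
  · filter_upwards [hmem] with t ht
    exact (hbnd t ht).2

lemma aux17_lt_one (T : ℝ) (hT : 0 < T) (β : ℝ) (hβ : 0 < β) (hβ1 : β < 1) (c : ℝ) :
    Tendsto (fun t => (T - t) ^ β
        * ∫ s in (0:ℝ)..t, Real.exp (c * (T - s) ^ β) / (T - s) ^ 2)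
      (nhdsWithin T (Set.Iio T)) atTop := by
  set l₀ := nhdsWithin (0:ℝ) (Set.Ioi 0) with hl₀
  set m₀ := Real.exp (-(|c| * (T - T / 2) ^ β)) with hm₀
  have hm₀pos : 0 < m₀ := Real.exp_pos _
  set G : ℝ → ℝ := fun u => m₀ * (u ^ β * u⁻¹ - u ^ β * (T - T / 2)⁻¹) with hG_def
  have hGlim : Tendsto G l₀ atTop := by
    have h1 : Tendsto (fun u : ℝ => u ^ β * u⁻¹) l₀ atTop := by
      apply (aux17_rpowNegTop (β - 1) (by linarith)).congr'
      filter_upwards [self_mem_nhdsWithin] with u hu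
      have hu' : (0:ℝ) < u := hu
      rw [← Real.rpow_neg_one u, ← Real.rpow_add hu']
      ring_nf
    have h2 : Tendsto (fun u : ℝ => -(u ^ β * (T - T / 2)⁻¹)) l₀ (nhds 0) := by
      have := ((aux17_rpow0 β hβ).mul (tendsto_const_nhds (x := (T - T/2)⁻¹) (f := l₀))).neg
      simpa using this
    have h3 := h1.atTop_add h2
    have h4 := h3.const_mul_atTop hm₀pos
    apply h4.congr
    intro u
    simp only [hG_def]
    ring
  apply tendsto_atTop_mono' _ _ (hGlim.comp (aux17_lim1 T))
  have hmem : Set.Ioo (T / 2) T ∈ nhdsWithin T (Set.Iio T) :=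
    Ioo_mem_nhdsLT_of_mem ⟨by linarith, le_refl T⟩
  filter_upwards [hmem] with t ht
  have ht₀T : T / 2 < T := by linarith
  have ht₀t : T / 2 ≤ t := ht.1.le
  have htT : t < T := ht.2
  have hsplit : (∫ s in (0:ℝ)..t, Real.exp (c * (T - s) ^ β) / (T - s) ^ 2)
      = (∫ s in (0:ℝ)..(T/2), Real.exp (c * (T - s) ^ β) / (T - s) ^ 2)
      + (∫ s in (T/2)..t, Real.exp (c * (T - s) ^ β) / (T - s) ^ 2) :=
    (intervalIntegral.integral_add_adjacent_intervals
      (aux17_intgr T c β hβ hT ht₀T) (aux17_intgr T c β hβ ht₀T htT)).symm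
  have hI₀ := aux17_int_bounds T β hβ c (le_of_lt (by linarith : (0:ℝ) < T/2)) ht₀T
  rw [sub_zero] at hI₀
  have hI₀low : (0:ℝ) ≤ ∫ s in (0:ℝ)..(T/2), Real.exp (c * (T - s) ^ β) / (T - s) ^ 2 := by
    refine le_trans ?_ hI₀.1
    apply mul_nonneg (Real.exp_nonneg _)
    have h5 : T⁻¹ ≤ (T - T/2)⁻¹ := by
      apply inv_anti₀ <;> linarith
    linarith
  have hI₁ := (aux17_int_bounds T β hβ c ht₀t htT).1
  have huβ : (0:ℝ) ≤ (T - t) ^ β := Real.rpow_nonneg (by linarith) β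
  simp only [Function.comp]
  calc G (T - t) = (T - t) ^ β * (m₀ * ((T - t)⁻¹ - (T - T/2)⁻¹)) := by
        simp only [hG_def]; ring
    _ ≤ (T - t) ^ β * ((∫ s in (0:ℝ)..(T/2), Real.exp (c * (T - s) ^ β) / (T - s) ^ 2)
        + (∫ s in (T/2)..t, Real.exp (c * (T - s) ^ β) / (T - s) ^ 2)) := by
        apply mul_le_mul_of_nonneg_left _ huβ
        rw [hm₀]
        linarith
    _ = _ := by rw [← hsplit]

end Aux17

theorem stmt_17 (T : ℝ) (hT : 0 < T) (β : ℝ) (hβ : 0 < β)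
    (ε : ℝ) (hε : ε = 1 ∨ ε = -1) :
    (β = 1 →
      Tendsto (fun t => (T - t) ^ β
          * ∫ s in (0:ℝ)..t, Real.exp (ε * (2 / β) * (T - s) ^ β) / (T - s) ^ 2)
        (nhdsWithin T (Set.Iio T)) (nhds 1)) ∧
    (1 < β →
      Tendsto (fun t => (T - t) ^ β
          * ∫ s in (0:ℝ)..t, Real.exp (ε * (2 / β) * (T - s) ^ β) / (T - s) ^ 2)
        (nhdsWithin T (Set.Iio T)) (nhds 0)) ∧
    (β < 1 →
      Tendsto (fun t => (T - t) ^ β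
          * ∫ s in (0:ℝ)..t, Real.exp (ε * (2 / β) * (T - s) ^ β) / (T - s) ^ 2)
        (nhdsWithin T (Set.Iio T)) atTop) := by
  refine ⟨fun h1 => ?_, fun h1 => ?_, fun h1 => ?_⟩
  · apply aux17_ge_one T hT β hβ h1.ge (ε * (2 / β)) 1
    apply tendsto_const_nhds.congr'
    filter_upwards [self_mem_nhdsWithin] with u hu
    have hu' : (0:ℝ) < u := hu
    rw [h1, Real.rpow_one, mul_inv_cancel₀ hu'.ne']
  · apply aux17_ge_one T hT β hβ h1.le (ε * (2 / β)) 0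
    apply (aux17_rpow0 (β - 1) (by linarith)).congr'
    filter_upwards [self_mem_nhdsWithin] with u hu
    have hu' : (0:ℝ) < u := hu
    rw [← Real.rpow_neg_one u, ← Real.rpow_add hu']
    ring_nf
  · exact aux17_lt_one T hT β hβ h1 (ε * (2 / β))
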